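/- Let the confocal ellipse and hyperbola satisfy αa = c², let a ray from F₁=(−c,0) with slope k ∈ (k₁,k₂) ⊂ (k_min,k_max) meet the ellipse at à and the right branch of the hyperbola at B̃. Then the billiard trajectory starting at F₁ toward Ã, reflecting off the ellipse at Ã, passes through F₂=(c,0); reflecting off the line y=0 at F₂ it goes to B̃; and reflecting off the hyperbola at B̃ it continues along the straight line through B̃ and F₁, i.e. the outgoing direction is parallel to the initial direction F₁Ã and its line passes through F₁. -/

import Mathlib

/-- The billiard (specular) reflection of a direction vector `u` across the line through the
origin with direction `v` in the plane: `r(u) = 2(⟨u,v⟩/⟨v,v⟩)v − u`. -/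
noncomputable def reflectDir (v u : ℝ × ℝ) : ℝ × ℝ :=
  (2 * (u.1 * v.1 + u.2 * v.2) / (v.1 ^ 2 + v.2 ^ 2) * v.1 - u.1,
   2 * (u.1 * v.1 + u.2 * v.2) / (v.1 ^ 2 + v.2 ^ 2) * v.2 - u.2)

private lemma aux_ca (a b c : ℝ) (hb : 0 < b) (ha : 0 < a) (hc : 0 < c)
    (h : c ^ 2 = a ^ 2 - b ^ 2) : c < a := by nlinarith

private lemma aux_alc (α β c : ℝ) (hα : 0 < α) (hβ : 0 < β) (hc : 0 < c)
    (h : c ^ 2 = α ^ 2 + β ^ 2) : α < c := by nlinarith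

private lemma aux_k4 (κ : ℝ) (h1 : 1 < κ) (h2 : κ < 2) :
    0 < 4 - (κ - 1) ^ 2 ∧ 0 < 2 - (κ - 1) ^ 2 := by constructor <;> nlinarith

private lemma aux_x1a (a b x1 y1 : ℝ) (ha : 0 < a) (hb : 0 < b) (hy : 0 < y1)
    (hE : b ^ 2 * x1 ^ 2 + a ^ 2 * y1 ^ 2 = a ^ 2 * b ^ 2) : x1 ^ 2 < a ^ 2 := by
  nlinarith [mul_pos (mul_pos ha ha) (mul_pos hy hy)]

private lemma aux_x1pos (a b c k x1 : ℝ) (hb : 0 < b) (hc : 0 < c) (hk : 0 < k)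
    (hca : c < a) (hkb : k * c < b) (hx1c : 0 < x1 + c)
    (hEk : b ^ 2 * x1 ^ 2 + a ^ 2 * k ^ 2 * (x1 + c) ^ 2 = a ^ 2 * b ^ 2) : 0 < x1 := by
  by_contra h
  push_neg at h
  have ha : 0 < a := hc.trans hca
  have hbk : (0:ℝ) < b ^ 2 - k ^ 2 * c ^ 2 := by
    nlinarith [mul_pos (sub_pos.2 hkb) (show (0:ℝ) < b + k * c by positivity)]
  have hbc : (0:ℝ) ≤ a ^ 2 * b ^ 2 - b ^ 2 * c ^ 2 := by
    nlinarith [mul_pos (mul_pos hb hb) (mul_pos (sub_pos.2 hca) (show (0:ℝ) < a + c by linarith))]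
  nlinarith [mul_pos (mul_pos (mul_pos ha ha) hx1c) hbk,
    mul_nonneg (neg_nonneg.2 h) hbc,
    mul_nonneg (mul_nonneg (mul_nonneg (neg_nonneg.2 h) hx1c.le) hc.le)
      (show (0:ℝ) ≤ b ^ 2 + a ^ 2 * k ^ 2 by positivity)]

private lemma aux_case2 (a b c k x1 x2 : ℝ) (ha : 0 < a) (hb : 0 < b) (hc : 0 < c)
    (hk : 0 < k) (hkb : k * c < b) (hx1 : 0 < x1) (hx2 : 0 < x2)
    (hkey : c ^ 4 * (a ^ 2 * k ^ 2 + b ^ 2) * x1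
      = a ^ 2 * (k ^ 2 * c ^ 2 - b ^ 2) * c ^ 2 * x2) : False := by
  have h1 : 0 < c ^ 4 * (a ^ 2 * k ^ 2 + b ^ 2) * x1 := by positivity
  have h2 : a ^ 2 * (k ^ 2 * c ^ 2 - b ^ 2) * c ^ 2 * x2 < 0 := by
    have hneg : k ^ 2 * c ^ 2 - b ^ 2 < 0 := by
      nlinarith [mul_pos (sub_pos.2 hkb) (show (0:ℝ) < b + k * c by positivity)]
    have := mul_pos (mul_pos (mul_pos ha ha) (mul_pos hc hc)) hx2
    nlinarith
  linarith

private lemma aux_axm (a c x1 : ℝ) (ha : 0 < a) (hc : 0 < c) (hca : c < a)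
    (hx : x1 ^ 2 < a ^ 2) : 0 < a ^ 2 - c * x1 := by
  rcases le_or_gt x1 0 with h | h
  · nlinarith
  · have : x1 < a := by nlinarith
    nlinarith

private lemma aux_cx2 (α c x2 : ℝ) (hα : 0 < α) (hαc : α < c) (hx : α ≤ x2) :
    0 < c * x2 - α ^ 2 := by nlinarith

set_option maxHeartbeats 1000000 in
/-- Let the confocal ellipse `x²/a² + y²/b² = 1` and hyperbola `x²/α² − y²/β² = 1` have foci
`F₁ = (−c,0)`, `F₂ = (c,0)` and satisfy `αa = c²`, `κ = a/c ∈ (1,2)`. Let a ray from `F₁`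
with slope `k ∈ (k₁, k₂) ⊂ (k_min, k_max)` meet the ellipse at `Ã = (x₁,y₁)` and the right
branch of the hyperbola at `B̃ = (x₂,y₂)`. Then the billiard trajectory from `F₁` toward
`Ã`, after reflecting off the ellipse at `Ã` (in the tangent direction `(−y₁/b², x₁/a²)`),
heads to `F₂`; after reflecting off the line `y = 0` at `F₂` it heads to `B̃`; after
reflecting off the hyperbola at `B̃` (tangent direction `(y₂/β², x₂/α²)`) it moves in the
direction `B̃ − F₁`, whose line passes through `F₁` and which is parallel (with positive
ratio) to the initial direction `Ã − F₁`. -/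
theorem billiard_trajectory_returns
    (a b α β c κ k k₁ k₂ x₁ y₁ x₂ y₂ : ℝ)
    (hb : 0 < b) (hab : b < a) (hα : 0 < α) (hβ : 0 < β) (hc : 0 < c)
    (hce : c ^ 2 = a ^ 2 - b ^ 2) (hch : c ^ 2 = α ^ 2 + β ^ 2)
    (hαa : α * a = c ^ 2) (hκ : κ = a / c) (hκ1 : 1 < κ) (hκ2 : κ < 2)
    (hkmin : (κ - 1) * Real.sqrt (4 - (κ - 1) ^ 2) / (2 - (κ - 1) ^ 2) < k₁)
    (hk₁ : k₁ < k) (hk₂ : k < k₂) (hkmax : k₂ < Real.sqrt (κ ^ 2 - 1))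
    (hAe : x₁ ^ 2 / a ^ 2 + y₁ ^ 2 / b ^ 2 = 1)
    (hAr : y₁ = k * (x₁ + c)) (hAy : 0 < y₁)
    (hBh : x₂ ^ 2 / α ^ 2 - y₂ ^ 2 / β ^ 2 = 1)
    (hBr : y₂ = k * (x₂ + c)) (hBx : α ≤ x₂) :
    (∃ l₁ > (0 : ℝ),
        reflectDir (-y₁ / b ^ 2, x₁ / a ^ 2) ((x₁, y₁) - (-c, 0))
          = l₁ • ((c, (0 : ℝ)) - (x₁, y₁))) ∧
    (∃ l₂ > (0 : ℝ),
        reflectDir (1, 0) ((c, (0 : ℝ)) - (x₁, y₁)) = l₂ • ((x₂, y₂) - (c, 0))) ∧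
    (∃ l₃ > (0 : ℝ),
        reflectDir (y₂ / β ^ 2, x₂ / α ^ 2) ((x₂, y₂) - (c, 0))
          = l₃ • ((x₂, y₂) - (-c, 0))) ∧
    (∃ μ > (0 : ℝ), (x₂, y₂) - (-c, (0 : ℝ)) = μ • ((x₁, y₁) - (-c, 0))) := by
  have ha : 0 < a := hb.trans hab
  have hane : a ≠ 0 := ha.ne'
  have hbne : b ≠ 0 := hb.ne'
  have hcne : c ≠ 0 := hc.ne'
  have hαne : α ≠ 0 := hα.ne'
  have hβne : β ≠ 0 := hβ.ne'
  have hca : c < a := aux_ca a b c hb ha hc hce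
  have hαc : α < c := aux_alc α β c hα hβ hc hch
  -- positivity of k
  have hκ1' : 0 < κ - 1 := by linarith
  obtain ⟨h4, hden⟩ := aux_k4 κ hκ1 hκ2
  have hk1pos : 0 < k₁ :=
    lt_trans (div_pos (mul_pos hκ1' (Real.sqrt_pos.2 h4)) hden) hkmin
  have hk0 : 0 < k := by linarith
  -- k*c < b
  have hsqrt : Real.sqrt (κ ^ 2 - 1) = b / c := by
    rw [hκ, show (a / c) ^ 2 - 1 = (b / c) ^ 2 by
      field_simp
      linarith [hce]]
    exact Real.sqrt_sq (by positivity)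
  have hkb : k * c < b := by
    rw [hsqrt] at hkmax
    have : k < b / c := by linarith
    exact (lt_div_iff₀ hc).1 this
  -- basic point facts
  have hx1c : 0 < x₁ + c := by
    by_contra h
    push_neg at h
    have := mul_nonpos_of_nonneg_of_nonpos hk0.le h
    linarith [hAr ▸ hAy]
  have hx2c : 0 < x₂ + c := by linarith
  have hy2 : 0 < y₂ := by rw [hBr]; exact mul_pos hk0 hx2c
  have hx2pos : 0 < x₂ := by linarith
  -- cleared conic equations
  have hE : b ^ 2 * x₁ ^ 2 + a ^ 2 * y₁ ^ 2 = a ^ 2 * b ^ 2 := by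
    have h := hAe
    field_simp at h
    linarith
  have hH : β ^ 2 * x₂ ^ 2 - α ^ 2 * y₂ ^ 2 = α ^ 2 * β ^ 2 := by
    have h := hBh
    field_simp at h
    linarith
  have hEk : b ^ 2 * x₁ ^ 2 + a ^ 2 * k ^ 2 * (x₁ + c) ^ 2 = a ^ 2 * b ^ 2 := by
    linear_combination hE - a ^ 2 * (y₁ + k * (x₁ + c)) * hAr
  have hHk : β ^ 2 * x₂ ^ 2 - α ^ 2 * k ^ 2 * (x₂ + c) ^ 2 = α ^ 2 * β ^ 2 := by
    linear_combination hH + α ^ 2 * (y₂ + k * (x₂ + c)) * hBr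
  have hx1a : x₁ ^ 2 < a ^ 2 := aux_x1a a b x₁ y₁ ha hb hAy hE
  have hx1pos : 0 < x₁ := aux_x1pos a b c k x₁ hb hc hk0 hca hkb hx1c hEk
  have h2 : a ^ 2 * β ^ 2 = c ^ 2 * b ^ 2 := by
    linear_combination (-(α * a + c ^ 2)) * hαa + (-(a ^ 2)) * hch + (-(c ^ 2)) * hce
  have hQ' : c ^ 2 * (a ^ 2 * (k ^ 2 * c ^ 2 - b ^ 2) * x₂ ^ 2 + 2 * a ^ 2 * k ^ 2 * c ^ 3 * x₂
      + c ^ 4 * (a ^ 2 * k ^ 2 + b ^ 2)) = 0 := by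
    linear_combination (-(a ^ 4)) * hHk + (a ^ 2 * x₂ ^ 2 - a ^ 2 * α ^ 2) * h2
      + ((-(a ^ 2 * k ^ 2 * (x₂ + c) ^ 2) - c ^ 2 * b ^ 2) * (α * a + c ^ 2)) * hαa
  have hQ : a ^ 2 * (k ^ 2 * c ^ 2 - b ^ 2) * x₂ ^ 2 + 2 * a ^ 2 * k ^ 2 * c ^ 3 * x₂
      + c ^ 4 * (a ^ 2 * k ^ 2 + b ^ 2) = 0 :=
    (mul_eq_zero.1 hQ').resolve_left (pow_ne_zero 2 hcne)
  have hx1x2 : x₁ * x₂ = c ^ 2 := by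
    have hfact : (x₁ * x₂ - c ^ 2) *
        (a ^ 2 * (k ^ 2 * c ^ 2 - b ^ 2) * (x₁ * x₂ + c ^ 2) + 2 * a ^ 2 * k ^ 2 * c ^ 3 * x₁)
        = 0 := by
      linear_combination x₁ ^ 2 * hQ - c ^ 4 * hEk
    rcases mul_eq_zero.1 hfact with h | h
    · linarith [sub_eq_zero.1 h]
    · exact absurd (by linear_combination x₁ * hQ - x₂ * h : c ^ 4 * (a ^ 2 * k ^ 2 + b ^ 2) * x₁
          = a ^ 2 * (k ^ 2 * c ^ 2 - b ^ 2) * c ^ 2 * x₂)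
        (fun hkey => aux_case2 a b c k x₁ x₂ ha hb hc hk0 hkb hx1pos hx2pos hkey)
  -- auxiliary positivity for part 1 and 3
  have hax1m : 0 < a ^ 2 - c * x₁ := aux_axm a c x₁ ha hc hca hx1a
  have hax1p : 0 < a ^ 2 + c * x₁ := by positivity
  have hcx2m : 0 < c * x₂ - α ^ 2 := aux_cx2 α c x₂ hα hαc hBx
  have hcx2p : 0 < c * x₂ + α ^ 2 := by positivity
  refine ⟨⟨(a ^ 2 + c * x₁) / (a ^ 2 - c * x₁), div_pos hax1p hax1m, ?_⟩,
    ⟨y₁ / y₂, div_pos hAy hy2, ?_⟩,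
    ⟨(c * x₂ - α ^ 2) / (c * x₂ + α ^ 2), div_pos hcx2m hcx2p, ?_⟩,
    ⟨(x₂ + c) / (x₁ + c), div_pos hx2c hx1c, ?_⟩⟩
  · simp only [reflectDir, Prod.mk_sub_mk, Prod.smul_mk, smul_eq_mul, Prod.mk.injEq]
    constructor
    · field_simp
      rw [eq_div_iff (by intro h; linarith)]
      linear_combination ((-(x₁+c)*(a^2-x₁*c) - (a^2+x₁*c)*(c-x₁))*a^2 - 2*(a^2-x₁*c)*(x₁*b^2-(x₁+c)*a^2)) * hE + ((-(x₁+c)*(a^2-x₁*c) - (a^2+x₁*c)*(c-x₁))*b^2*x₁^2 - 2*(a^2-x₁*c)*b^2*(a^2-x₁^2)*x₁) * hce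
    · field_simp
      rw [eq_div_iff (by intro h; linarith)]
      linear_combination 2*x₁*c*y₁*(a^2*hE + b^2*x₁^2*hce) + 2*x₁^2*y₁*b^2*(a^2-x₁*c)*hce
  · simp only [reflectDir, Prod.mk_sub_mk, Prod.smul_mk, smul_eq_mul, Prod.mk.injEq]
    constructor
    · field_simp
      linear_combination (c - x₁) * hBr - (x₂ - c) * hAr - 2 * k * hx1x2
    · field_simp
      ring
  · simp only [reflectDir, Prod.mk_sub_mk, Prod.smul_mk, smul_eq_mul, Prod.mk.injEq]
    constructor
    · field_simp
      linear_combination (-α^2*(-(x₂-c)*(x₂*c+α^2) - (x₂*c-α^2)*(x₂+c)) - 2*(x₂*c+α^2)*((x₂-c)*α^2+x₂*β^2)) * hH + (-β^2*x₂^2*(-(x₂-c)*(x₂*c+α^2) - (x₂*c-α^2)*(x₂+c)) - 2*x₂*β^2*(x₂^2-α^2)*(x₂*c+α^2)) * hch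
    · field_simp
      linear_combination (2*x₂*c*y₂*α^2) * hH + (-2*x₂^2*y₂*β^2*α^2) * hch
  · simp only [Prod.mk_sub_mk, Prod.smul_mk, smul_eq_mul, Prod.mk.injEq]
    constructor
    · field_simp
      ring
    · rw [hAr, hBr]
      field_simp
      ring
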